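/- Let M ≥ 1 and let φ_1, …, φ_M be complex-valued functions, each analytic on a neighborhood of 0 in ℂ. Then the limit, as the tuple (η_1, …, η_M) of pairwise distinct complex numbers tends to (0, …, 0), of det[ φ_i(η_j) ]_{i,j=1}^{M} / ∏_{1 ≤ i < j ≤ M} (η_j - η_i) exists and equals (∏_{n=0}^{M-1} 1/n!) · det[ φ_i^{(j-1)}(0) ]_{i,j=1}^{M}, where φ^{(k)} denotes the k-th complex derivative. -/

import Mathlib

open Finset Filter

lemma pf_aux {ι : Type*} [DecidableEq ι] {s : Finset ι} (hs : s.Nonempty)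
    {v : ι → ℂ} (hv : Set.InjOn v ↑s) {z : ℂ} (hz : ∀ l ∈ s, z - v l ≠ 0) :
    (∏ l ∈ s, (z - v l))⁻¹ =
      ∑ l ∈ s, (∏ m ∈ s.erase l, (v l - v m))⁻¹ * (z - v l)⁻¹ := by
  symm
  apply eq_inv_of_mul_eq_one_left
  have key : ∑ l ∈ s, Polynomial.eval z (Lagrange.basis s v l) = 1 := by
    rw [← Polynomial.eval_finset_sum, Lagrange.sum_basis hv hs, Polynomial.eval_one]
  rw [Finset.sum_mul, ← key]
  refine Finset.sum_congr rfl fun l hl => ?_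
  rw [mul_assoc, ← Finset.mul_prod_erase s _ hl, inv_mul_cancel_left₀ (hz l hl),
    Lagrange.basis, Polynomial.eval_prod, ← Finset.prod_inv_distrib,
    ← Finset.prod_mul_distrib]
  refine (Finset.prod_congr rfl fun m _ => ?_).symm
  simp [Lagrange.basisDivisor]

lemma prod_swap_vandermonde {M : ℕ} (f : Fin M → Fin M → ℂ) :
    ∏ i : Fin M, ∏ j ∈ Ioi i, f i j = ∏ j : Fin M, ∏ i ∈ Iio j, f i j :=
  Finset.prod_comm' (by simp)

noncomputable def clampC (ρ : ℝ) (w : ℂ) : ℂ := ((ρ / max ρ ‖w‖ : ℝ) : ℂ) * w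

lemma clampC_zero (ρ : ℝ) : clampC ρ 0 = 0 := by simp [clampC]

lemma clampC_eq {ρ : ℝ} (hρ : 0 < ρ) {w : ℂ} (hw : ‖w‖ ≤ ρ) : clampC ρ w = w := by
  rw [clampC, max_eq_left hw, div_self hρ.ne']
  simp

lemma norm_clampC {ρ : ℝ} (hρ : 0 < ρ) (w : ℂ) : ‖clampC ρ w‖ ≤ ρ := by
  have hmax : (0:ℝ) < max ρ ‖w‖ := lt_max_of_lt_left hρ
  rw [clampC, norm_mul, Complex.norm_real, Real.norm_eq_abs,
    abs_of_nonneg (by positivity)]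
  rw [div_mul_eq_mul_div, div_le_iff₀ hmax]
  have : ‖w‖ ≤ max ρ ‖w‖ := le_max_right _ _
  nlinarith [norm_nonneg w]

lemma continuous_clampC {ρ : ℝ} (hρ : 0 < ρ) : Continuous (clampC ρ) := by
  apply Continuous.mul _ continuous_id
  exact Complex.continuous_ofReal.comp
    (continuous_const.div (continuous_const.max continuous_norm)
      (fun w => (lt_max_of_lt_left hρ).ne'))

/-- Let `M ≥ 1` and let `φ_1, …, φ_M : ℂ → ℂ` each be analytic near `0`.
Then, as the tuple `(η_1, …, η_M)` of pairwise distinct complex numbers tends to `0`,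
`det[ φ_i(η_j) ] / ∏_{i<j} (η_j - η_i)` tends to
`(∏_{n=0}^{M-1} 1/n!) · det[ φ_i^{(j-1)}(0) ]`. -/
theorem det_ratio_vandermonde_limit (M : ℕ) (hM : 1 ≤ M) (φ : Fin M → ℂ → ℂ)
    (hφ : ∀ i, AnalyticAt ℂ (φ i) 0) :
    Filter.Tendsto
      (fun η : Fin M → ℂ =>
        Matrix.det (Matrix.of fun i j : Fin M => φ i (η j)) /
          ∏ i : Fin M, ∏ j ∈ Finset.Ioi i, (η j - η i))
      (nhdsWithin 0 {η : Fin M → ℂ | Function.Injective η})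
      (nhds ((∏ n ∈ Finset.range M, (1 : ℂ) / (Nat.factorial n : ℂ)) *
        Matrix.det (Matrix.of fun i j : Fin M => iteratedDeriv (j : ℕ) (φ i) 0))) := by
  classical
  haveI : NeZero M := ⟨by omega⟩
  -- Choose a common radius of analyticity
  have hrad : ∀ i, ∃ r : ℝ, 0 < r ∧ AnalyticOnNhd ℂ (φ i) (Metric.closedBall 0 r) := by
    intro i
    obtain ⟨r, hr, h⟩ := (hφ i).exists_ball_analyticOnNhd
    exact ⟨r / 2, by positivity,
      h.mono (Metric.closedBall_subset_ball (by linarith))⟩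
  choose rad hrad0 hrada using hrad
  set r : ℝ := Finset.univ.inf' Finset.univ_nonempty rad with hrdef
  have hr0 : 0 < r := by
    rw [hrdef, Finset.lt_inf'_iff]
    exact fun i _ => hrad0 i
  have hana : ∀ i, AnalyticOnNhd ℂ (φ i) (Metric.closedBall 0 r) := fun i =>
    (hrada i).mono (Metric.closedBall_subset_closedBall
      (Finset.inf'_le _ (Finset.mem_univ i)))
  have hcont : ∀ i, ContinuousOn (φ i) (Metric.closedBall 0 r) := fun i =>
    (hana i).continuousOn
  have hdc : ∀ i, DiffContOnCl ℂ (φ i) (Metric.ball 0 r) := by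
    intro i
    apply DifferentiableOn.diffContOnCl
    rw [closure_ball 0 hr0.ne']
    exact (hana i).differentiableOn
  -- the matrix of contour-integral divided differences
  set G : (Fin M → ℂ) → Matrix (Fin M) (Fin M) ℂ := fun η =>
    Matrix.of fun i j => (2 * Real.pi * Complex.I : ℂ)⁻¹ •
      ∮ z in C(0, r), (∏ l ∈ Finset.Iic j, (z - clampC (r/2) (η l)))⁻¹ • φ i z
    with hGdef
  -- Power series at 0
  set R : NNReal := ⟨r, hr0.le⟩ with hRdef
  have hFPS : ∀ i, HasFPowerSeriesOnBall (φ i) (cauchyPowerSeries (φ i) 0 r) 0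
      (R : ENNReal) := by
    intro i
    have hball : Metric.ball (0:ℂ) r = Metric.ball (0:ℂ) (R:ℝ) := rfl
    have := DiffContOnCl.hasFPowerSeriesOnBall (R := R) (c := (0:ℂ))
      (f := φ i) (by rw [← hball]; exact hdc i) (by exact_mod_cast hr0)
    exact this
  -- value of G at 0
  have hval0 : ∀ i j, G 0 i j = ((j : ℕ).factorial : ℂ)⁻¹ * iteratedDeriv (j : ℕ) (φ i) 0 := by
    intro i j
    have h1 : ((j : ℕ).factorial : ℂ) * (cauchyPowerSeries (φ i) 0 r (j : ℕ) fun _ => (1:ℂ))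
        = iteratedDeriv (j : ℕ) (φ i) 0 := by
      rw [iteratedDeriv_eq_iteratedFDeriv, ← (hFPS i).factorial_smul (y := (1:ℂ)) (j : ℕ),
        nsmul_eq_mul]
    have h2 : G 0 i j = (cauchyPowerSeries (φ i) 0 r (j : ℕ) fun _ => (1:ℂ)) := by
      rw [cauchyPowerSeries_apply]
      simp only [hGdef, Matrix.of_apply, Pi.zero_apply, clampC_zero, sub_zero]
      congr 2
      funext z
      rw [Finset.prod_const, Fin.card_Iic, smul_smul]
      congr 1
      rw [one_div, inv_pow, ← mul_inv, ← pow_succ]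
    rw [h2, ← h1, ← mul_assoc, inv_mul_cancel₀ (by exact_mod_cast (j:ℕ).factorial_ne_zero),
      one_mul]
  -- continuity of G
  have hr2 : (0:ℝ) < r / 2 := by linarith
  have hcm : Continuous fun p : (Fin M → ℂ) × ℝ => circleMap 0 r p.2 :=
    (continuous_circleMap 0 r).comp continuous_snd
  have hGcont : Continuous fun η => Matrix.det (G η) := by
    apply Continuous.matrix_det
    apply continuous_matrix
    intro i j
    apply Continuous.const_smul
    simp only [circleIntegral]
    apply intervalIntegral.continuous_parametric_intervalIntegral_of_continuous'
    have hprod : Continuous fun p : (Fin M → ℂ) × ℝ =>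
        ∏ l ∈ Finset.Iic j, (circleMap 0 r p.2 - clampC (r/2) (p.1 l)) := by
      apply continuous_finset_prod
      intro l _
      exact hcm.sub ((continuous_clampC hr2).comp
        ((continuous_apply l).comp continuous_fst))
    have hne : ∀ p : (Fin M → ℂ) × ℝ,
        (∏ l ∈ Finset.Iic j, (circleMap 0 r p.2 - clampC (r/2) (p.1 l))) ≠ 0 := by
      intro p
      rw [Finset.prod_ne_zero_iff]
      intro l _
      rw [sub_ne_zero]
      intro hzw
      have h1 : ‖circleMap 0 r p.2‖ = r := by
        rw [norm_circleMap_zero, abs_of_pos hr0]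
      have h2 := norm_clampC hr2 (p.1 l)
      rw [← hzw, h1] at h2
      linarith
    have hphi : Continuous fun p : (Fin M → ℂ) × ℝ => φ i (circleMap 0 r p.2) := by
      apply (hcont i).comp_continuous hcm
      intro p
      rw [Metric.mem_closedBall, dist_zero_right,
        norm_circleMap_zero, abs_of_pos hr0]
    have hderiv : Continuous fun p : (Fin M → ℂ) × ℝ =>
        deriv (circleMap 0 r) p.2 := by
      simp only [deriv_circleMap]
      exact ((continuous_circleMap 0 r).comp continuous_snd).mul continuous_const
    exact hderiv.smul ((hprod.inv₀ hne).smul hphi)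
  -- the key identity for small injective tuples
  have key : ∀ η : Fin M → ℂ, (∀ l, ‖η l‖ < r/2) → Function.Injective η →
      Matrix.det (Matrix.of fun i j : Fin M => φ i (η j)) /
        ∏ i : Fin M, ∏ j ∈ Finset.Ioi i, (η j - η i) = Matrix.det (G η) := by
    intro η hη hinj
    have hcl : ∀ l, clampC (r/2) (η l) = η l := fun l => clampC_eq hr2 (hη l).le
    have hmem : ∀ l, η l ∈ Metric.ball (0:ℂ) r := by
      intro l
      rw [Metric.mem_ball, dist_zero_right]
      linarith [hη l]
    set W : Matrix (Fin M) (Fin M) ℂ := Matrix.of fun l j =>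
      if l ≤ j then (∏ m ∈ (Finset.Iic j).erase l, (η l - η m))⁻¹ else 0 with hWdef
    have hGW : G η = (Matrix.of fun i j : Fin M => φ i (η j)) * W := by
      ext i j
      rw [Matrix.mul_apply]
      have hstep : ∀ l : Fin M,
          (Matrix.of fun i j : Fin M => φ i (η j)) i l * W l j
          = if l ∈ Finset.Iic j then
              (∏ m ∈ (Finset.Iic j).erase l, (η l - η m))⁻¹ * φ i (η l) else 0 := by
        intro l
        by_cases h : l ≤ j <;>
          simp [hWdef, h, Finset.mem_Iic, mul_comm]
      rw [Finset.sum_congr rfl fun l _ => hstep l, Finset.sum_ite_mem,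
        Finset.univ_inter]
      simp only [hGdef, Matrix.of_apply, hcl]
      have hEq : Set.EqOn
          (fun z => (∏ l ∈ Finset.Iic j, (z - η l))⁻¹ • φ i z)
          (fun z => ∑ l ∈ Finset.Iic j,
            ((∏ m ∈ (Finset.Iic j).erase l, (η l - η m))⁻¹ * (z - η l)⁻¹) • φ i z)
          (Metric.sphere 0 r) := by
        intro z hz
        have hzne : ∀ l ∈ Finset.Iic j, z - η l ≠ 0 := by
          intro l _
          rw [sub_ne_zero]
          intro hzl
          rw [Metric.mem_sphere, dist_zero_right] at hz
          have hlt := hη l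
          rw [← hzl] at hlt
          linarith
        show (∏ l ∈ Finset.Iic j, (z - η l))⁻¹ • φ i z = ∑ l ∈ Finset.Iic j,
          ((∏ m ∈ (Finset.Iic j).erase l, (η l - η m))⁻¹ * (z - η l)⁻¹) • φ i z
        rw [pf_aux ⟨j, Finset.mem_Iic.2 le_rfl⟩ (Function.Injective.injOn hinj) hzne,
          Finset.sum_smul]
      rw [circleIntegral.integral_congr hr0.le hEq]
      have hInt : ∀ l ∈ Finset.Iic j, IntervalIntegrable
          (fun θ => ((∏ m ∈ (Finset.Iic j).erase l, (η l - η m))⁻¹ : ℂ) •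
            (deriv (circleMap 0 r) θ •
              ((circleMap 0 r θ - η l)⁻¹ • φ i (circleMap 0 r θ))))
          MeasureTheory.volume 0 (2 * Real.pi) := by
        intro l _
        apply Continuous.intervalIntegrable
        apply Continuous.fun_const_smul
        apply Continuous.fun_smul
        · exact ((continuous_circleMap 0 r).mul continuous_const).congr
            fun θ => (deriv_circleMap 0 r θ).symm
        apply Continuous.fun_smul
        · apply Continuous.inv₀ ((continuous_circleMap 0 r).fun_sub continuous_const)
          intro θ
          rw [sub_ne_zero]
          intro hc
          have h1 : ‖circleMap 0 r θ‖ = r := by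
            rw [norm_circleMap_zero, abs_of_pos hr0]
          have hlt := hη l
          rw [← hc] at hlt
          linarith
        · apply (hcont i).comp_continuous (continuous_circleMap 0 r)
          intro θ
          rw [Metric.mem_closedBall, dist_zero_right,
            norm_circleMap_zero, abs_of_pos hr0]
      have hswap : (∮ z in C(0, r), ∑ l ∈ Finset.Iic j,
            ((∏ m ∈ (Finset.Iic j).erase l, (η l - η m))⁻¹ * (z - η l)⁻¹) • φ i z)
          = ∑ l ∈ Finset.Iic j, (∏ m ∈ (Finset.Iic j).erase l, (η l - η m))⁻¹ •
              ∮ z in C(0, r), (z - η l)⁻¹ • φ i z := by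
        simp only [circleIntegral]
        simp only [← intervalIntegral.integral_smul]
        rw [← intervalIntegral.integral_finset_sum hInt]
        congr 1
        funext θ
        simp only [Finset.smul_sum, smul_eq_mul, Finset.mul_sum]
        exact Finset.sum_congr rfl fun l _ => by ring
      rw [hswap]
      rw [Finset.smul_sum]
      refine Finset.sum_congr rfl fun l _ => ?_
      rw [(hdc i).circleIntegral_sub_inv_smul (hmem l)]
      simp only [smul_eq_mul]
      have hpi : (2 * (Real.pi : ℂ) * Complex.I) ≠ 0 := by
        simp [Real.pi_ne_zero, Complex.I_ne_zero]
      field_simp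
    have hdetW : W.det = (∏ i : Fin M, ∏ j ∈ Finset.Ioi i, (η j - η i))⁻¹ := by
      have htri : W.BlockTriangular id := by
        intro a b hab
        simp only [hWdef, Matrix.of_apply]
        have hnle : ¬ a ≤ b := not_le.2 hab
        rw [if_neg hnle]
      rw [Matrix.det_of_upperTriangular htri,
        prod_swap_vandermonde (fun i j => η j - η i), ← Finset.prod_inv_distrib]
      refine Finset.prod_congr rfl fun j _ => ?_
      simp only [hWdef, Matrix.of_apply, if_pos le_rfl, Finset.Iic_erase]
    rw [hGW, Matrix.det_mul, hdetW, div_eq_mul_inv]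
  -- eventual equality
  have heq : (fun η => Matrix.det (G η))
      =ᶠ[nhdsWithin 0 {η : Fin M → ℂ | Function.Injective η}]
      (fun η : Fin M → ℂ =>
        Matrix.det (Matrix.of fun i j : Fin M => φ i (η j)) /
          ∏ i : Fin M, ∏ j ∈ Finset.Ioi i, (η j - η i)) := by
    have h1 : ∀ᶠ η : Fin M → ℂ in nhdsWithin 0 {η | Function.Injective η},
        ∀ l, ‖η l‖ < r/2 := by
      apply eventually_nhdsWithin_of_eventually_nhds
      have hb : Metric.ball (0 : Fin M → ℂ) (r/2) ∈ nhds 0 :=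
        Metric.ball_mem_nhds _ hr2
      filter_upwards [hb] with η hη l
      exact lt_of_le_of_lt (norm_le_pi_norm η l) (mem_ball_zero_iff.1 hη)
    filter_upwards [h1, eventually_mem_nhdsWithin] with η hη hinj
    exact (key η hη hinj).symm
  have hlim : Tendsto (fun η => Matrix.det (G η))
      (nhdsWithin 0 {η : Fin M → ℂ | Function.Injective η})
      (nhds (Matrix.det (G 0))) :=
    (hGcont.tendsto 0).mono_left nhdsWithin_le_nhds
  have hG0 : Matrix.det (G 0) = (∏ n ∈ Finset.range M, (1:ℂ)/(Nat.factorial n)) *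
      Matrix.det (Matrix.of fun i j : Fin M => iteratedDeriv (j:ℕ) (φ i) 0) := by
    have hfold : G 0 = Matrix.of fun i j : Fin M => (((j:ℕ).factorial : ℂ))⁻¹ *
        (Matrix.of fun i j : Fin M => iteratedDeriv (j:ℕ) (φ i) 0) i j := by
      ext i j
      exact hval0 i j
    rw [hfold, Matrix.det_mul_row]
    congr 1
    rw [← Fin.prod_univ_eq_prod_range (fun n => (1:ℂ)/(Nat.factorial n))]
    exact Finset.prod_congr rfl fun j _ => by rw [one_div]
  rw [← hG0]
  exact Tendsto.congr' heq hlim
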